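/- Let n ≥ 3, γ > 0, A > 0, and let ŵ₂ be the positive solution of γ η ŵ₂' + (1+2γ) ŵ₂ = f₂ constructed as ŵ₂(η) = -(1/(γ η^{2+1/γ})) ∫_η^∞ f₂(x) x^{1+1/γ} dx, where f₂(η) = -(n-1)(1/γ²)·η^{-2/γ-2}/(A^{-1/γ} - η^{-1/γ})². Then lim_{η → A⁺} (η - A) ŵ₂(η) = (n-1)/(γ A). -/

import Mathlib

open Real MeasureTheory Filter Topology

theorem stmt7 (n : ℕ) (hn : 3 ≤ n) (γ A : ℝ) (hγ : 0 < γ) (hA : 0 < A)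
    (f₂ w₂ : ℝ → ℝ)
    (hf2 : ∀ η : ℝ, f₂ η = -((n : ℝ) - 1) * (1 / γ ^ 2) * η ^ (-(2/γ) - 2) /
        (A ^ (-(1/γ)) - η ^ (-(1/γ))) ^ 2)
    (hw2 : ∀ η : ℝ, w₂ η = -(1 / (γ * η ^ (2 + 1/γ))) *
        ∫ x in Set.Ioi η, f₂ x * x ^ (1 + 1/γ)) :
    Tendsto (fun η => (η - A) * w₂ η) (nhdsWithin A (Set.Ioi A))
      (nhds (((n : ℝ) - 1) / (γ * A))) := by
  have hγ' : γ ≠ 0 := hγ.ne'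
  set p : ℝ := -(1/γ) with hp
  have hp0 : p < 0 := by
    rw [hp]; simp [hγ, one_div, inv_pos]
  set c : ℝ := ((n : ℝ) - 1) / γ with hc
  set u : ℝ → ℝ := fun x => A ^ p - x ^ p with hu
  -- positivity of u on Ioi A
  have hupos : ∀ x : ℝ, A < x → 0 < u x := by
    intro x hx
    have := Real.rpow_lt_rpow_of_neg hA hx hp0
    simpa [hu] using sub_pos.mpr this
  -- derivative of u
  have huderiv : ∀ x : ℝ, 0 < x → HasDerivAt u (-(p * x ^ (p - 1))) x := by
    intro x hx
    have h := (Real.hasDerivAt_rpow_const (p := p) (Or.inl hx.ne'))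
    have h' := (hasDerivAt_const x (A ^ p)).sub h
    simp only [zero_sub] at h'
    exact h'
  -- derivative of -(c / u)
  have hFderiv : ∀ x : ℝ, A < x → HasDerivAt (fun y => -(c / u y))
      (-(f₂ x * x ^ (1 + 1/γ))) x := by
    intro x hx
    have hx0 : 0 < x := hA.trans hx
    have hux : u x ≠ 0 := (hupos x hx).ne'
    have h1 : HasDerivAt (fun y => (u y)⁻¹) (-(-(p * x ^ (p-1))) / (u x) ^ 2) x :=
      (huderiv x hx0).inv hux
    have h2 : HasDerivAt (fun y => -(c / u y))
        (-(c * ((-(-(p * x ^ (p-1)))) / (u x) ^ 2))) x := by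
      have h' := ((h1.const_mul c)).neg
      simp only [div_eq_mul_inv] at h' ⊢
      exact h'
    convert h2 using 1
    rw [hf2 x]
    have hxe : x ^ (-(2/γ) - 2) * x ^ (1 + 1/γ) = x ^ (p - 1) := by
      rw [← Real.rpow_add hx0, hp]; ring_nf
    have hud : (A ^ (-(1/γ)) - x ^ (-(1/γ))) = u x := rfl
    rw [hud]
    have key : -((n:ℝ)-1) * (1/γ^2) * x ^ (-(2/γ)-2) / (u x)^2 * x ^ (1+1/γ)
        = -((n:ℝ)-1) * (1/γ^2) * x ^ (p-1) / (u x)^2 := by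
      rw [← hxe]; ring
    rw [key, hc, hp]
    field_simp
  -- nonnegativity of the derivative
  have hnonneg : ∀ x : ℝ, A < x → 0 ≤ -(f₂ x * x ^ (1 + 1/γ)) := by
    intro x hx
    have hx0 : 0 < x := hA.trans hx
    rw [hf2 x]
    have hud : (A ^ (-(1/γ)) - x ^ (-(1/γ))) = u x := rfl
    rw [hud]
    have hn2 : (0:ℝ) ≤ (n:ℝ) - 1 := by
      have : (3:ℝ) ≤ (n:ℝ) := by exact_mod_cast hn
      linarith
    have h1 : 0 < x ^ (-(2/γ) - 2) := Real.rpow_pos_of_pos hx0 _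
    have h2 : 0 < x ^ (1 + 1/γ) := Real.rpow_pos_of_pos hx0 _
    have h3 : 0 < (u x) ^ 2 := pow_pos (hupos x hx) 2
    have hg2 : (0:ℝ) < 1/γ^2 := by positivity
    have hpos : 0 ≤ ((n:ℝ) - 1) * (1/γ^2) * x ^ (-(2/γ) - 2) / (u x)^2 * x ^ (1 + 1/γ) :=
      mul_nonneg (div_nonneg (mul_nonneg (mul_nonneg hn2 hg2.le) h1.le) h3.le) h2.le
    have heq2 : -(-((n:ℝ)-1) * (1/γ^2) * x ^ (-(2/γ)-2) / (u x)^2 * x ^ (1+1/γ))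
        = ((n:ℝ) - 1) * (1/γ^2) * x ^ (-(2/γ) - 2) / (u x)^2 * x ^ (1 + 1/γ) := by
      ring
    rw [heq2]
    exact hpos
  -- limit of -(c/u) at infinity
  have hAp : (0:ℝ) < A ^ p := Real.rpow_pos_of_pos hA _
  have htop : Tendsto (fun y => -(c / u y)) atTop (𝓝 (-(c * A ^ (1/γ)))) := by
    have h0 : Tendsto (fun y : ℝ => y ^ p) atTop (𝓝 0) := by
      rw [hp]; exact tendsto_rpow_neg_atTop (by positivity)
    have hu' : Tendsto u atTop (𝓝 (A ^ p)) := by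
      simpa [hu] using (tendsto_const_nhds (x := A ^ p)).sub h0
    have : Tendsto (fun y => -(c / u y)) atTop (𝓝 (-(c / A ^ p))) :=
      ((tendsto_const_nhds.div hu' hAp.ne').neg)
    convert this using 2
    rw [hp, Real.rpow_neg hA.le, div_eq_mul_inv c, inv_inv]
  -- the integral computation
  have hint : ∀ η : ℝ, A < η →
      (∫ x in Set.Ioi η, f₂ x * x ^ (1 + 1/γ)) = c * (A ^ (1/γ) - 1 / u η) := by
    intro η hη
    have hcont : ContinuousWithinAt (fun y => -(c / u y)) (Set.Ici η) η :=
      ((hFderiv η hη).continuousAt).continuousWithinAt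
    have key := integral_Ioi_of_hasDerivAt_of_nonneg hcont
      (fun x hx => hFderiv x (hη.trans hx))
      (fun x hx => hnonneg x (hη.trans hx)) htop
    have : (∫ x in Set.Ioi η, f₂ x * x ^ (1 + 1/γ)) =
        -∫ x in Set.Ioi η, -(f₂ x * x ^ (1 + 1/γ)) := by
      rw [integral_neg]; ring
    rw [this, key]
    ring
  -- limit of (η - A)/u η
  have hψ : HasDerivAt (fun x : ℝ => x ^ p) (p * A ^ (p - 1)) A :=
    Real.hasDerivAt_rpow_const (Or.inl hA.ne')
  have hslope := hasDerivAt_iff_tendsto_slope.mp hψ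
  have hd0 : p * A ^ (p - 1) ≠ 0 := by
    have : (0:ℝ) < A ^ (p-1) := Real.rpow_pos_of_pos hA _
    exact mul_ne_zero hp0.ne this.ne'
  have hL : Tendsto (fun η => (η - A) / u η) (nhdsWithin A (Set.Ioi A))
      (𝓝 (γ * A ^ (1 + 1/γ))) := by
    have h1 : Tendsto (fun η => -(slope (fun x : ℝ => x ^ p) A η)⁻¹)
        (nhdsWithin A (Set.Ioi A)) (𝓝 (-(p * A ^ (p - 1))⁻¹)) := by
      have hsub : Set.Ioi A ⊆ {A}ᶜ := fun x hx => by
        simp only [Set.mem_compl_iff, Set.mem_singleton_iff]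
        exact ne_of_gt hx
      exact ((hslope.mono_left (nhdsWithin_mono A hsub)).inv₀ hd0).neg
    have heq : ∀ η : ℝ, A < η →
        -(slope (fun x : ℝ => x ^ p) A η)⁻¹ = (η - A) / u η := by
      intro η hη
      have h3 : (fun x : ℝ => x ^ p) η - (fun x : ℝ => x ^ p) A = -(u η) := by
        simp only [hu]; ring
      rw [slope_def_field, h3, neg_div, inv_neg, neg_neg, inv_div]
    have hlim : -(p * A ^ (p - 1))⁻¹ = γ * A ^ (1 + 1/γ) := by
      rw [mul_inv, hp]
      rw [← Real.rpow_neg hA.le]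
      have : -(-(1/γ) - 1) = 1 + 1/γ := by ring
      rw [this]
      rw [inv_neg, one_div, inv_inv]
      ring
    rw [← hlim]
    refine h1.congr' ?_
    filter_upwards [self_mem_nhdsWithin] with η hη
    exact heq η hη
  -- continuity of the prefactor
  have hpre : Tendsto (fun η : ℝ => 1 / (γ * η ^ (2 + 1/γ)))
      (nhdsWithin A (Set.Ioi A)) (𝓝 (1 / (γ * A ^ (2 + 1/γ)))) := by
    have hc1 : ContinuousAt (fun η : ℝ => 1 / (γ * η ^ (2 + 1/γ))) A := by
      have h1 : ContinuousAt (fun η : ℝ => η ^ (2 + 1/γ)) A :=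
        (Real.continuousAt_rpow_const A _ (Or.inl hA.ne'))
      have h2 : γ * A ^ (2 + 1/γ) ≠ 0 := by
        have := Real.rpow_pos_of_pos hA (2 + 1/γ); positivity
      exact (continuousAt_const.div ((continuousAt_const.mul h1)) h2)
    exact hc1.continuousWithinAt
  -- assemble
  have hmain : Tendsto (fun η : ℝ =>
      -(1 / (γ * η ^ (2 + 1/γ))) * (c * (A ^ (1/γ) * (η - A) - (η - A) / u η)))
      (nhdsWithin A (Set.Ioi A)) (𝓝 (((n : ℝ) - 1) / (γ * A))) := by
    have hsub : Tendsto (fun η : ℝ => η - A) (nhdsWithin A (Set.Ioi A)) (𝓝 0) := by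
      have h5 : Tendsto (fun η : ℝ => η - A) (𝓝 A) (𝓝 (A - A)) :=
        ((continuous_id.sub continuous_const).tendsto A)
      rw [sub_self] at h5
      exact h5.mono_left nhdsWithin_le_nhds
    have h3 : Tendsto (fun η : ℝ => A ^ (1/γ) * (η - A) - (η - A) / u η)
        (nhdsWithin A (Set.Ioi A)) (𝓝 (A ^ (1/γ) * 0 - γ * A ^ (1 + 1/γ))) :=
      ((tendsto_const_nhds.mul hsub).sub hL)
    have h4 := (hpre.neg).mul (h3.const_mul c)
    convert h4 using 2
    rw [hc]
    have hA2 : A ^ ((2:ℝ) + 1/γ) = A * A ^ ((1:ℝ) + 1/γ) := by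
      rw [show (2:ℝ) + 1/γ = 1 + (1 + 1/γ) by ring, Real.rpow_add hA, Real.rpow_one]
    rw [hA2]
    have hA1 : (0:ℝ) < A ^ ((1:ℝ) + 1/γ) := Real.rpow_pos_of_pos hA _
    field_simp
    ring
  refine hmain.congr' ?_
  filter_upwards [self_mem_nhdsWithin] with η hη
  rw [hw2 η, hint η hη]
  ring
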